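/- Let k be a field with a primitive third root of unity r, and V a 2-dimensional k-vector space with basis u, v. Define c: V⊗V → V⊗V by c(u⊗u) = v⊗u, c(v⊗u) = v⊗v, c(u⊗v) = -u⊗u - v⊗u, c(v⊗v) = -u⊗v - v⊗v. Then c satisfies the braid equation (c⊗id)(id⊗c)(c⊗id) = (id⊗c)(c⊗id)(id⊗c) on V⊗V⊗V. -/

import Mathlib

open TensorProduct

theorem nichols_braiding_satisfies_braid_equation
    {k V : Type*} [Field k] (r : k) (h3 : (3 : k) ≠ 0)
    (hr : r ^ 2 + r + 1 = 0) (hr1 : r ≠ 1)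
    [AddCommGroup V] [Module k V] (B : Module.Basis (Fin 2) k V)
    (c : V ⊗[k] V →ₗ[k] V ⊗[k] V)
    (huu : c (B 0 ⊗ₜ[k] B 0) = B 1 ⊗ₜ[k] B 0)
    (hvu : c (B 1 ⊗ₜ[k] B 0) = B 1 ⊗ₜ[k] B 1)
    (huv : c (B 0 ⊗ₜ[k] B 1) = -(B 0 ⊗ₜ[k] B 0) - B 1 ⊗ₜ[k] B 0)
    (hvv : c (B 1 ⊗ₜ[k] B 1) = -(B 0 ⊗ₜ[k] B 1) - B 1 ⊗ₜ[k] B 1) :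
    ∀ w : (V ⊗[k] V) ⊗[k] V,
      (TensorProduct.map c LinearMap.id)
        ((TensorProduct.assoc k V V V).symm
          ((TensorProduct.map LinearMap.id c)
            ((TensorProduct.assoc k V V V)
              ((TensorProduct.map c LinearMap.id) w))))
      = (TensorProduct.assoc k V V V).symm
          ((TensorProduct.map LinearMap.id c)
            ((TensorProduct.assoc k V V V)
              ((TensorProduct.map c LinearMap.id)
                ((TensorProduct.assoc k V V V).symm
                  ((TensorProduct.map LinearMap.id c)
                    ((TensorProduct.assoc k V V V) w)))))) := by

  set F1 := TensorProduct.map c (LinearMap.id (R := k) (M := V))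
  set F2 := TensorProduct.map (LinearMap.id (R := k) (M := V)) c
  set A := (TensorProduct.assoc k V V V).toLinearMap
  set A' := (TensorProduct.assoc k V V V).symm.toLinearMap
  suffices h : F1 ∘ₗ A' ∘ₗ F2 ∘ₗ A ∘ₗ F1 = A' ∘ₗ F2 ∘ₗ A ∘ₗ F1 ∘ₗ A' ∘ₗ F2 ∘ₗ A by
    intro w
    exact congrArg (fun f => f w) h
  apply ((B.tensorProduct B).tensorProduct B).ext
  rintro ⟨⟨i, j⟩, l⟩
  simp only [Module.Basis.tensorProduct_apply, LinearMap.comp_apply, F1, F2, A, A',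
    LinearEquiv.coe_coe]
  fin_cases i <;> fin_cases j <;> fin_cases l <;>
    simp [huu, hvu, huv, hvv, TensorProduct.tmul_sub, TensorProduct.sub_tmul,
      TensorProduct.tmul_neg, TensorProduct.neg_tmul, TensorProduct.assoc_tmul,
      TensorProduct.assoc_symm_tmul] <;>
    abel
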